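/- The informational power of the 2-dimensional octahedral (complete MUB) POVM (π_y)_{y=1}^6 equals (1/6) ln 4 = (1/3) ln 2: the supremum over all ensembles (ρ_x) of the mutual information I(ρ; π) equals (1/3) ln 2, and it is attained by the anti-octahedral ensemble ρ_x = (1/12)(I − u_x·σ), x = 1,…,6, which satisfies ρ_x π_x = 0 for every x. -/

import Mathlib

open MeasureTheory Matrix Finset Filter
open scoped ComplexOrder

noncomputable section

/-- The `k`-fold Kronecker tensor power of a `d × d` matrix, acting on `(ℂ^d)^{⊗k}`
(indexed by functions `Fin k → Fin d`). -/
def matTensorPow {d : ℕ} (M : Matrix (Fin d) (Fin d) ℂ) (k : ℕ) :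
    Matrix (Fin k → Fin d) (Fin k → Fin d) ℂ :=
  Matrix.of fun f g => ∏ i, M (f i) (g i)

/-- The orthogonal projection onto the symmetric subspace of `(ℂ^d)^{⊗k}`,
written as the average of the permutation operators. -/
def symProj (k d : ℕ) : Matrix (Fin k → Fin d) (Fin k → Fin d) ℂ :=
  ((Nat.factorial k : ℂ))⁻¹ •
    ∑ σ : Equiv.Perm (Fin k),
      Matrix.of fun f g => if (∀ i, f (σ i) = g i) then (1 : ℂ) else 0

/-- A (finite) POVM on `ℂ^d`: positive semidefinite effects summing to the identity. -/
def IsPOVM {d m : ℕ} (π : Fin m → Matrix (Fin d) (Fin d) ℂ) : Prop :=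
  (∀ y, (π y).PosSemidef) ∧ ∑ y, π y = 1

/-- A spherical quantum `t`-design POVM on `ℂ^d`. -/
def IsTDesignPOVM {d m : ℕ} (t : ℕ) (π : Fin m → Matrix (Fin d) (Fin d) ℂ) : Prop :=
  IsPOVM π ∧ (∀ y, π y ≠ 0) ∧
    ∀ k, 1 ≤ k → k ≤ t →
      ((d : ℂ))⁻¹ • ∑ y, (((π y).trace) ^ (k - 1))⁻¹ • matTensorPow (π y) k
        = ((Nat.choose (d - 1 + k) k : ℂ))⁻¹ • symProj k d

/-- A (finite) ensemble on `ℂ^d`: positive semidefinite matrices with unit total trace. -/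
def IsEnsemble {d n : ℕ} (ρ : Fin n → Matrix (Fin d) (Fin d) ℂ) : Prop :=
  (∀ x, (ρ x).PosSemidef) ∧ ∑ x, (ρ x).trace = 1

/-- The mutual information (in nats) of the joint distribution
`p_{x,y} = Tr(ρ_x π_y)`; terms with `p_{x,y} = 0` vanish. -/
def mutualInfo {d n m : ℕ} (ρ : Fin n → Matrix (Fin d) (Fin d) ℂ)
    (π : Fin m → Matrix (Fin d) (Fin d) ℂ) : ℝ :=
  ∑ x, ∑ y,
    ((ρ x * π y).trace).re *
      Real.log (((ρ x * π y).trace).re /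
        (((ρ x).trace).re * ∑ x', ((ρ x' * π y).trace).re))

/-- The informational power of a POVM: the supremum of the mutual information
over all (finite) ensembles. -/
def infoPower {d m : ℕ} (π : Fin m → Matrix (Fin d) (Fin d) ℂ) : ℝ :=
  sSup {w | ∃ (n : ℕ) (ρ : Fin n → Matrix (Fin d) (Fin d) ℂ),
    IsEnsemble ρ ∧ w = mutualInfo ρ π}

/-- The accessible information of an ensemble: the supremum of the mutual
information over all (finite) POVMs. -/
def accInfo {d n : ℕ} (ρ : Fin n → Matrix (Fin d) (Fin d) ℂ) : ℝ :=
  sSup {w | ∃ (m : ℕ) (π : Fin m → Matrix (Fin d) (Fin d) ℂ),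
    IsPOVM π ∧ w = mutualInfo ρ π}

/-- `η(u) = -u ln u` (with `η(0) = 0`). -/
def etaFn (u : ℝ) : ℝ := -u * Real.log u
/-- The Pauli matrices. -/
def pauliX : Matrix (Fin 2) (Fin 2) ℂ := !![0, 1; 1, 0]
def pauliY : Matrix (Fin 2) (Fin 2) ℂ := !![0, -Complex.I; Complex.I, 0]
def pauliZ : Matrix (Fin 2) (Fin 2) ℂ := !![1, 0; 0, -1]

/-- `s·σ = s₁σ₁ + s₂σ₂ + s₃σ₃` for `s ∈ ℝ³`. -/
def dotPauli (s : Fin 3 → ℝ) : Matrix (Fin 2) (Fin 2) ℂ :=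
  (s 0 : ℂ) • pauliX + (s 1 : ℂ) • pauliY + (s 2 : ℂ) • pauliZ
/-- Bloch vectors of the octahedral (complete MUB) POVM: `±e₁, ±e₂, ±e₃`. -/
def octaVec : Fin 6 → Fin 3 → ℝ :=
  ![![1, 0, 0], ![-1, 0, 0], ![0, 1, 0], ![0, -1, 0], ![0, 0, 1], ![0, 0, -1]]

/-- The 2-dimensional octahedral (complete MUB) POVM `π_y = (1/6)(I + u_y·σ)`. -/
def octaPOVM : Fin 6 → Matrix (Fin 2) (Fin 2) ℂ :=
  fun y => (1 / 6 : ℂ) • (1 + dotPauli (octaVec y))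
/-- The anti-octahedral ensemble `ρ_x = (1/12)(I − u_x·σ)`. -/
def antiOcta : Fin 6 → Matrix (Fin 2) (Fin 2) ℂ :=
  fun x => (1 / 12 : ℂ) • (1 - dotPauli (octaVec x))


-- ===== auxiliary scalar lemmas =====
/-- `A s = log(1+s) - log(1-s)` (twice artanh). -/
def Afn (s : ℝ) : ℝ := Real.log (1+s) - Real.log (1-s)

lemma Afn_hasDeriv {s : ℝ} (h0 : -1 < s) (h1 : s < 1) :
    HasDerivAt Afn (1/(1+s) + 1/(1-s)) s := by
  have h1' : (0:ℝ) < 1 - s := by linarith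
  have h0' : (0:ℝ) < 1 + s := by linarith
  have d1 : HasDerivAt (fun s : ℝ => Real.log (1+s)) (1/(1+s)) s := by
    have := (Real.hasDerivAt_log h0'.ne').comp s ((hasDerivAt_id s).const_add 1)
    simpa [one_div, Function.comp_def] using this
  have d2 : HasDerivAt (fun s : ℝ => Real.log (1-s)) (-(1/(1-s))) s := by
    have hlin : HasDerivAt (fun s : ℝ => 1 - s) (-1) s := by
      simpa using ((hasDerivAt_id s).const_sub 1)
    have := (Real.hasDerivAt_log h1'.ne').comp s hlin
    simp only [Function.comp_def] at this
    refine this.congr_deriv ?_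
    field_simp
  exact (d1.sub d2).congr_deriv (by simp [sub_neg_eq_add])

lemma Ffn_hasDeriv {t : ℝ} (h0 : -1 < t) (h1 : t < 1) :
    HasDerivAt (fun u : ℝ => 2*u/(1-u^2) - Afn u) (4*t^2/(1-t^2)^2) t := by
  have hden : (0:ℝ) < 1 - t^2 := by nlinarith
  have h1t : (0:ℝ) < 1 - t := by linarith
  have h2t : (0:ℝ) < 1 + t := by linarith
  have dr : HasDerivAt (fun u : ℝ => 2*u/(1-u^2)) ((2*(1-t^2) - 2*t*(-(2*t)))/(1-t^2)^2) t := by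
    have hnum : HasDerivAt (fun u : ℝ => 2*u) 2 t := by simpa using (hasDerivAt_id t).const_mul 2
    have hden' : HasDerivAt (fun u : ℝ => 1-u^2) (-(2*t)) t := by
      simpa using ((hasDerivAt_pow 2 t).const_sub 1)
    exact hnum.div hden' hden.ne'
  have dF := dr.sub (Afn_hasDeriv h0 h1)
  refine dF.congr_deriv ?_
  field_simp
  ring

/-- `A s ≤ 2s/(1-s²)` on `[0,1)`. -/
lemma Afn_le (s : ℝ) (h0 : 0 ≤ s) (h1 : s < 1) : Afn s ≤ 2*s/(1-s^2) := by
  set F : ℝ → ℝ := fun u => 2*u/(1-u^2) - Afn u with hF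
  have hcont : ContinuousOn F (Set.Icc 0 s) := by
    apply ContinuousOn.sub
    · apply ContinuousOn.div (by fun_prop) (by fun_prop)
      intro t ht
      have ht1 : t < 1 := lt_of_le_of_lt ht.2 h1
      have : 0 ≤ t := ht.1
      nlinarith
    · apply ContinuousOn.sub
      · apply ContinuousOn.log (by fun_prop)
        intro t ht
        have : 0 ≤ t := ht.1; positivity
      · apply ContinuousOn.log (by fun_prop)
        intro t ht
        have ht1 : t < 1 := lt_of_le_of_lt ht.2 h1
        intro hc; nlinarith
  have mono := monotoneOn_of_deriv_nonneg (convex_Icc 0 s) hcont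
    (fun t ht => by
      rw [interior_Icc] at ht
      exact (Ffn_hasDeriv (by linarith [ht.1]) (lt_of_lt_of_le ht.2 h1.le)).differentiableAt.differentiableWithinAt)
    (fun t ht => by
      rw [interior_Icc] at ht
      rw [(Ffn_hasDeriv (by linarith [ht.1]) (lt_of_lt_of_le ht.2 h1.le)).deriv]
      positivity)
  have h00 : F 0 = 0 := by simp [hF, Afn]
  have := mono (Set.left_mem_Icc.2 h0) (Set.right_mem_Icc.2 h0) h0
  rw [h00] at this
  simpa [hF] using this

/-- `A` has nonneg slope comparison: for `0 < τ ≤ σ < 1`, `A τ / τ ≤ A σ / σ`. -/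
lemma Afn_div_mono {τ σ : ℝ} (hτ : 0 < τ) (hτσ : τ ≤ σ) (hσ : σ < 1) :
    Afn τ / τ ≤ Afn σ / σ := by
  set R : ℝ → ℝ := fun u => Afn u / u with hR
  have hcont : ContinuousOn R (Set.Icc τ σ) := by
    apply ContinuousOn.div
    · apply ContinuousOn.sub
      · apply ContinuousOn.log (by fun_prop)
        intro t ht; have := hτ.trans_le ht.1; positivity
      · apply ContinuousOn.log (by fun_prop)
        intro t ht
        have : t < 1 := lt_of_le_of_lt ht.2 hσ
        intro hc; nlinarith
    · fun_prop
    · intro t ht; exact (hτ.trans_le ht.1).ne'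
  have hderiv : ∀ t ∈ Set.Ioo τ σ, 0 ≤ deriv R t := by
    intro t ht
    have ht0 : 0 < t := hτ.trans ht.1
    have ht1 : t < 1 := ht.2.trans hσ
    have dA := Afn_hasDeriv (by linarith) ht1
    have dR : HasDerivAt R (((1/(1+t) + 1/(1-t)) * t - Afn t * 1)/t^2) t :=
      dA.div (hasDerivAt_id t) ht0.ne'
    rw [dR.deriv]
    apply div_nonneg _ (by positivity)
    have hA := Afn_le t ht0.le ht1
    have h1t : (0:ℝ) < 1 - t := by linarith
    have h2t : (0:ℝ) < 1 + t := by linarith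
    have hden : (0:ℝ) < 1 - t^2 := by nlinarith
    have heq : (1/(1+t) + 1/(1-t)) * t = 2*t/(1-t^2) := by
      field_simp
      ring
    rw [heq]
    linarith
  have mono := monotoneOn_of_deriv_nonneg (convex_Icc τ σ) hcont
    (fun t ht => by
      rw [interior_Icc] at ht
      have ht0 : 0 < t := hτ.trans ht.1
      have ht1 : t < 1 := ht.2.trans hσ
      exact ((Afn_hasDeriv (by linarith) ht1).div (hasDerivAt_id t) ht0.ne').differentiableAt.differentiableWithinAt)
    (fun t ht => by rw [interior_Icc] at ht; exact hderiv t ht)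
  exact mono (Set.left_mem_Icc.2 hτσ) (Set.right_mem_Icc.2 hτσ) hτσ

/-- core inequality: `(1+σ)ln(1+σ)+(1-σ)ln(1-σ) ≤ 2 ln 2 · σ²` for `σ ∈ [0,1]`. -/
lemma core_ineq (σ : ℝ) (h0 : 0 ≤ σ) (h1 : σ ≤ 1) :
    (1+σ)*Real.log (1+σ) + (1-σ)*Real.log (1-σ) ≤ 2*Real.log 2*σ^2 := by
  set h : ℝ → ℝ := fun u => 2*Real.log 2*u^2 - ((1+u)*Real.log (1+u) + (1-u)*Real.log (1-u)) with hh
  suffices hs : 0 ≤ h σ by simpa [hh] using hs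
  have hcont : Continuous h := by
    have c1 : Continuous fun u : ℝ => (1+u)*Real.log (1+u) :=
      (Real.continuous_mul_log.comp (by fun_prop))
    have c2 : Continuous fun u : ℝ => (1-u)*Real.log (1-u) :=
      (Real.continuous_mul_log.comp (by fun_prop))
    fun_prop
  have hderiv : ∀ t : ℝ, -1 < t → t < 1 → HasDerivAt h (4*Real.log 2*t - Afn t) t := by
    intro t ht0 ht1
    have h1t : (0:ℝ) < 1 - t := by linarith
    have h2t : (0:ℝ) < 1 + t := by linarith
    have d1 : HasDerivAt (fun u : ℝ => (1+u)*Real.log (1+u)) (Real.log (1+t) + 1) t := by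
      have dl : HasDerivAt (fun u : ℝ => Real.log (1+u)) (1/(1+t)) t := by
        have := (Real.hasDerivAt_log h2t.ne').comp t ((hasDerivAt_id t).const_add 1)
        simpa [one_div, Function.comp_def] using this
      have := (((hasDerivAt_id t).const_add 1).mul dl)
      refine this.congr_deriv ?_
      field_simp
      simp only [id_eq]
      ring
    have d2 : HasDerivAt (fun u : ℝ => (1-u)*Real.log (1-u)) (-(Real.log (1-t) + 1)) t := by
      have hlin : HasDerivAt (fun u : ℝ => 1 - u) (-1) t := by
        simpa using ((hasDerivAt_id t).const_sub 1)
      have dl : HasDerivAt (fun u : ℝ => Real.log (1-u)) (-(1/(1-t))) t := by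
        have := (Real.hasDerivAt_log h1t.ne').comp t hlin
        simp only [Function.comp_def] at this
        refine this.congr_deriv ?_
        field_simp
      have := hlin.mul dl
      refine this.congr_deriv ?_
      field_simp
      ring
    have dq : HasDerivAt (fun u : ℝ => 2*Real.log 2*u^2) (2*Real.log 2*(2*t)) t := by
      simpa using ((hasDerivAt_pow 2 t).const_mul (2*Real.log 2))
    have := dq.sub (d1.add d2)
    refine this.congr_deriv ?_
    simp only [Afn]
    ring
  rcases eq_or_lt_of_le h0 with h0' | h0'
  · subst_vars
    norm_num [hh]
  rcases eq_or_lt_of_le h1 with h1' | h1'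
  · -- σ = 1 : equality
    subst_vars
    have : h 1 = 0 := by
      norm_num [hh, Real.log_zero]
    linarith [this.ge]
  -- 0 < σ < 1
  by_cases hc : Afn σ ≤ 4*Real.log 2*σ
  · -- h monotone on [0,σ]
    have mono := monotoneOn_of_deriv_nonneg (convex_Icc 0 σ) hcont.continuousOn
      (fun t ht => by
        rw [interior_Icc] at ht
        exact (hderiv t (by linarith [ht.1]) (ht.2.trans h1')).differentiableAt.differentiableWithinAt)
      (fun t ht => by
        rw [interior_Icc] at ht
        rw [(hderiv t (by linarith [ht.1]) (ht.2.trans h1')).deriv]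
        have hAt : Afn t ≤ 4*Real.log 2*t := by
          have := Afn_div_mono ht.1 ht.2.le h1'
          have hAσ : Afn σ / σ ≤ 4*Real.log 2 := by
            rw [div_le_iff₀ h0']; linarith
          have : Afn t / t ≤ 4*Real.log 2 := this.trans hAσ
          calc Afn t = (Afn t / t) * t := (div_mul_cancel₀ _ ht.1.ne').symm
          _ ≤ 4*Real.log 2 * t := mul_le_mul_of_nonneg_right this ht.1.le
        linarith)
    have h00 : h 0 = 0 := by simp [hh]
    have := mono (Set.left_mem_Icc.2 h0) (Set.right_mem_Icc.2 h0) h0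
    linarith [this, h00.ge]
  · -- h antitone on [σ,1]
    push_neg at hc
    have anti := antitoneOn_of_deriv_nonpos (convex_Icc σ 1) hcont.continuousOn
      (fun t ht => by
        rw [interior_Icc] at ht
        exact (hderiv t (by linarith [h0'.trans ht.1]) ht.2).differentiableAt.differentiableWithinAt)
      (fun t ht => by
        rw [interior_Icc] at ht
        rw [(hderiv t (by linarith [h0'.trans ht.1]) ht.2).deriv]
        have ht0 : 0 < t := h0'.trans ht.1
        have hstep : Afn σ / σ ≤ Afn t / t := Afn_div_mono h0' ht.1.le ht.2
        have h4 : 4*Real.log 2 < Afn σ / σ := by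
          rw [lt_div_iff₀ h0']; linarith
        have : 4*Real.log 2 * t ≤ Afn t := by
          have := (h4.le.trans hstep)
          calc 4*Real.log 2 * t ≤ (Afn t / t) * t :=
                mul_le_mul_of_nonneg_right this ht0.le
          _ = Afn t := div_mul_cancel₀ _ ht0.ne'
        linarith)
    have h10 : h 1 = 0 := by
      norm_num [hh, Real.log_zero]
    have := anti (Set.left_mem_Icc.2 h1) (Set.right_mem_Icc.2 h1) h1
    linarith [this, h10.ge]

lemma pair_bound_nn {p s : ℝ} (hp : 0 < p) (h0 : 0 ≤ s) (hs : s ≤ p) :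
    (p+s)/6 * Real.log ((p+s)/p) + (p-s)/6 * Real.log ((p-s)/p)
      ≤ (Real.log 2/3) * (s^2/p) := by
  set σ := s/p with hσ
  have hσ0 : 0 ≤ σ := div_nonneg h0 hp.le
  have hσ1 : σ ≤ 1 := (div_le_one hp).2 hs
  have e1 : (p+s)/p = 1+σ := by rw [hσ]; field_simp
  have e2 : (p-s)/p = 1-σ := by rw [hσ]; field_simp
  have e3 : p+s = p*(1+σ) := by rw [hσ]; field_simp
  have e4 : p-s = p*(1-σ) := by rw [hσ]; field_simp
  have e5 : s^2/p = σ^2*p := by rw [hσ]; field_simp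
  have core := core_ineq σ hσ0 hσ1
  rw [e1, e2, e3, e4, e5]
  have h6 : (0:ℝ) ≤ p/6 := by positivity
  calc p*(1+σ)/6 * Real.log (1+σ) + p*(1-σ)/6 * Real.log (1-σ)
      = p/6 * ((1+σ)*Real.log (1+σ) + (1-σ)*Real.log (1-σ)) := by ring
    _ ≤ p/6 * (2*Real.log 2*σ^2) := mul_le_mul_of_nonneg_left core h6
    _ = Real.log 2/3 * (σ^2*p) := by ring

lemma pair_bound {p s : ℝ} (hp : 0 < p) (hs : s^2 ≤ p^2) :
    (p+s)/6 * Real.log ((p+s)/p) + (p-s)/6 * Real.log ((p-s)/p)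
      ≤ (Real.log 2/3) * (s^2/p) := by
  rcases le_total 0 s with h | h
  · exact pair_bound_nn hp h (by nlinarith)
  · have h2 := pair_bound_nn hp (by linarith : (0:ℝ) ≤ -s) (by nlinarith : -s ≤ p)
    have e1 : p + -s = p - s := by ring
    have e2 : p - -s = p + s := by ring
    have e3 : (-s)^2 = s^2 := by ring
    rw [e1, e2, e3] at h2
    linarith

lemma kl_term {q : ℝ} (hq : 0 ≤ q) : -(q * Real.log (6*q)) ≤ 1/6 - q := by
  rcases eq_or_lt_of_le hq with h | h
  · rw [← h]; norm_num
  · have hinv : (0:ℝ) < (6*q)⁻¹ := by positivity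
    have hl := Real.log_le_sub_one_of_pos hinv
    rw [Real.log_inv] at hl
    have hmul := mul_le_mul_of_nonneg_left hl h.le
    have hq6 : q * (6*q)⁻¹ = 1/6 := by field_simp
    nlinarith [hmul, hq6]

-- ===== auxiliary matrix lemmas =====
lemma octaVec_zero : octaVec 0 = ![1, 0, 0] := rfl
lemma octaVec_one : octaVec 1 = ![-1, 0, 0] := rfl
lemma octaVec_two : octaVec 2 = ![0, 1, 0] := rfl
lemma octaVec_three : octaVec 3 = ![0, -1, 0] := rfl
lemma octaVec_four : octaVec 4 = ![0, 0, 1] := rfl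
lemma octaVec_five : octaVec 5 = ![0, 0, -1] := rfl

lemma dotPauli_eq (s : Fin 3 → ℝ) :
    dotPauli s = !![(s 2 : ℂ), (s 0 : ℂ) - (s 1 : ℂ) * Complex.I;
                    (s 0 : ℂ) + (s 1 : ℂ) * Complex.I, -(s 2 : ℂ)] := by
  ext i j
  fin_cases i <;> fin_cases j <;>
    simp [dotPauli, pauliX, pauliY, pauliZ] <;> ring

lemma dotPauli_conjTranspose (s : Fin 3 → ℝ) : (dotPauli s)ᴴ = dotPauli s := by
  rw [dotPauli_eq]
  ext i j
  fin_cases i <;> fin_cases j <;>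
    simp [Matrix.conjTranspose_apply, Complex.ext_iff]

lemma dotPauli_mul_self (s : Fin 3 → ℝ) :
    dotPauli s * dotPauli s = (((s 0)^2 + (s 1)^2 + (s 2)^2 : ℝ) : ℂ) • 1 := by
  rw [dotPauli_eq]
  ext i j
  fin_cases i <;> fin_cases j <;>
    simp [Matrix.mul_apply, Fin.sum_univ_two, Matrix.one_apply] <;>
    ring_nf <;> simp [Complex.I_sq] <;> ring_nf

lemma dotPauli_trace (s : Fin 3 → ℝ) : (dotPauli s).trace = 0 := by
  rw [dotPauli_eq, Matrix.trace_fin_two]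
  simp

lemma octaVec_sq (y : Fin 6) :
    (octaVec y 0)^2 + (octaVec y 1)^2 + (octaVec y 2)^2 = 1 := by
  fin_cases y <;> norm_num [octaVec, Matrix.cons_val_two, Matrix.vecHead, Matrix.vecTail]

lemma trace_dotPauli_mul_dotPauli (s t : Fin 3 → ℝ) :
    (dotPauli s * dotPauli t).trace
      = 2 * ((s 0 * t 0 + s 1 * t 1 + s 2 * t 2 : ℝ) : ℂ) := by
  rw [dotPauli_eq, dotPauli_eq, Matrix.trace_fin_two]
  simp [Matrix.mul_apply, Fin.sum_univ_two]
  push_cast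
  ring_nf
  simp [Complex.I_sq]

/-- Trace of `M * dotPauli s` for an arbitrary 2×2 matrix `M`. -/
lemma trace_mul_dotPauli (M : Matrix (Fin 2) (Fin 2) ℂ) (s : Fin 3 → ℝ) :
    (M * dotPauli s).trace
      = (s 2 : ℂ) * (M 0 0 - M 1 1) + (s 0 : ℂ) * (M 0 1 + M 1 0)
        + (s 1 : ℂ) * Complex.I * (M 0 1 - M 1 0) := by
  rw [dotPauli_eq, Matrix.trace_fin_two]
  simp [Matrix.mul_apply, Fin.sum_univ_two]
  ring

lemma dotPauli_octa_sum :
    dotPauli (octaVec 0) + dotPauli (octaVec 1) + dotPauli (octaVec 2)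
      + dotPauli (octaVec 3) + dotPauli (octaVec 4) + dotPauli (octaVec 5) = 0 := by
  simp only [dotPauli_eq, octaVec_zero, octaVec_one, octaVec_two, octaVec_three,
    octaVec_four, octaVec_five]
  ext i j
  fin_cases i <;> fin_cases j <;>
    · simp
      try ring_nf

lemma octa_sum : ∑ y, octaPOVM y = 1 := by
  have h := dotPauli_octa_sum
  simp only [octaPOVM, Fin.sum_univ_six]
  rw [← smul_add, ← smul_add, ← smul_add, ← smul_add, ← smul_add]
  have e1 : ((1 : Matrix (Fin 2) (Fin 2) ℂ) + dotPauli (octaVec 0))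
      + (1 + dotPauli (octaVec 1)) + (1 + dotPauli (octaVec 2)) + (1 + dotPauli (octaVec 3))
      + (1 + dotPauli (octaVec 4)) + (1 + dotPauli (octaVec 5))
      = (1 + 1 + 1 + 1 + 1 + 1 : Matrix (Fin 2) (Fin 2) ℂ)
        + (dotPauli (octaVec 0) + dotPauli (octaVec 1) + dotPauli (octaVec 2)
          + dotPauli (octaVec 3) + dotPauli (octaVec 4) + dotPauli (octaVec 5)) := by
    abel
  rw [e1, h, add_zero]
  ext i j
  fin_cases i <;> fin_cases j <;>
    simp [Matrix.one_apply, Matrix.add_apply] <;> norm_num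

lemma octa_trace (y : Fin 6) : (octaPOVM y).trace = 1/3 := by
  simp only [octaPOVM, Matrix.trace_smul, Matrix.trace_add, Matrix.trace_one,
    dotPauli_trace]
  norm_num

lemma anti_trace (x : Fin 6) : (antiOcta x).trace = 1/6 := by
  simp only [antiOcta, Matrix.trace_smul, Matrix.trace_sub, Matrix.trace_one,
    dotPauli_trace]
  norm_num

/-- trace of `antiOcta x * octaPOVM y` -/
lemma trace_anti_octa (x y : Fin 6) :
    (antiOcta x * octaPOVM y).trace
      = (((1 - (octaVec x 0 * octaVec y 0 + octaVec x 1 * octaVec y 1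
          + octaVec x 2 * octaVec y 2)) / 36 : ℝ) : ℂ) := by
  simp only [antiOcta, octaPOVM, Matrix.smul_mul, Matrix.mul_smul, smul_smul]
  rw [sub_mul, mul_add, mul_add, one_mul, one_mul]
  have hmul1 : dotPauli (octaVec x) * 1 = dotPauli (octaVec x) := mul_one _
  rw [hmul1]
  simp only [Matrix.trace_smul, Matrix.trace_sub, Matrix.trace_add, Matrix.trace_one,
    dotPauli_trace, trace_dotPauli_mul_dotPauli]
  push_cast
  norm_num
  ring

lemma trace_mul_octaPOVM (M : Matrix (Fin 2) (Fin 2) ℂ) (y : Fin 6) :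
    (M * octaPOVM y).trace
      = (1/6 : ℂ) * (M.trace + (M * dotPauli (octaVec y)).trace) := by
  simp only [octaPOVM, Matrix.mul_smul, Matrix.trace_smul, mul_add, mul_one,
    Matrix.trace_add, smul_eq_mul]

lemma psd_det_nonneg {M : Matrix (Fin 2) (Fin 2) ℂ} (h : M.PosSemidef) : 0 ≤ M.det := by
  rw [h.1.det_eq_prod_eigenvalues]
  have hc : (∏ i, (h.1.eigenvalues i : ℂ)) = ((∏ i, h.1.eigenvalues i : ℝ) : ℂ) := by
    push_cast
    rfl
  have hnn := Complex.zero_le_real.2 (Finset.prod_nonneg (fun i (_ : i ∈ Finset.univ) => h.eigenvalues_nonneg i))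
  rwa [← hc] at hnn

lemma state_data {ρ : Matrix (Fin 2) (Fin 2) ℂ} (hρ : ρ.PosSemidef) :
    ∃ p n1 n2 n3 : ℝ, (ρ.trace).re = p ∧ 0 ≤ p ∧ n1^2 + n2^2 + n3^2 ≤ p^2 ∧
      ((ρ * octaPOVM 0).trace).re = (p + n1)/6 ∧ ((ρ * octaPOVM 1).trace).re = (p - n1)/6 ∧
      ((ρ * octaPOVM 2).trace).re = (p + n2)/6 ∧ ((ρ * octaPOVM 3).trace).re = (p - n2)/6 ∧
      ((ρ * octaPOVM 4).trace).re = (p + n3)/6 ∧ ((ρ * octaPOVM 5).trace).re = (p - n3)/6 := by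
  have hH := hρ.1
  have h10 : ρ 1 0 = (starRingEnd ℂ) (ρ 0 1) := (hH.apply 1 0).symm
  have him0 : (ρ 0 0).im = 0 := by
    have h0 := congrArg Complex.im (hH.apply 0 0)
    rw [Complex.star_def, Complex.conj_im] at h0
    linarith
  have him1 : (ρ 1 1).im = 0 := by
    have h0 := congrArg Complex.im (hH.apply 1 1)
    rw [Complex.star_def, Complex.conj_im] at h0
    linarith
  have ha : 0 ≤ (ρ 0 0).re := by
    have h0 := hρ.dotProduct_mulVec_nonneg (Pi.single 0 1)
    have he : dotProduct (star (Pi.single 0 1)) (ρ *ᵥ Pi.single 0 1) = ρ 0 0 := by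
      simp [dotProduct, Matrix.mulVec, Fin.sum_univ_two, Pi.single]
    rw [he] at h0
    exact (Complex.le_def.1 h0).1
  have hd : 0 ≤ (ρ 1 1).re := by
    have h0 := hρ.dotProduct_mulVec_nonneg (Pi.single 1 1)
    have he : dotProduct (star (Pi.single 1 1)) (ρ *ᵥ Pi.single 1 1) = ρ 1 1 := by
      simp [dotProduct, Matrix.mulVec, Fin.sum_univ_two, Pi.single]
    rw [he] at h0
    exact (Complex.le_def.1 h0).1
  have hdet : 0 ≤ (ρ.det).re := (Complex.le_def.1 (psd_det_nonneg hρ)).1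
  rw [Matrix.det_fin_two, h10] at hdet
  set a := (ρ 0 0).re
  set d := (ρ 1 1).re
  set β := (ρ 0 1).re
  set γ := (ρ 0 1).im
  have hdet' : β^2 + γ^2 ≤ a*d := by
    simp [Complex.sub_re, Complex.mul_re, Complex.conj_re, Complex.conj_im, him0, him1] at hdet
    nlinarith [hdet]
  have htr : (ρ.trace).re = a + d := by
    rw [Matrix.trace_fin_two]
    simp [Complex.add_re]
    rfl
  refine ⟨a + d, 2*β, -(2*γ), a - d, htr, by linarith, by nlinarith, ?_, ?_, ?_, ?_, ?_, ?_⟩ <;>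
  · rw [trace_mul_octaPOVM, trace_mul_dotPauli]
    simp only [octaVec_zero, octaVec_one, octaVec_two, octaVec_three, octaVec_four,
      octaVec_five, Matrix.cons_val_zero, Matrix.cons_val_one, Matrix.head_cons,
      Matrix.cons_val_two, Matrix.vecHead, Matrix.vecTail]
    rw [h10, Matrix.trace_fin_two]
    push_cast
    simp [Complex.add_re, Complex.mul_re, Complex.mul_im, Complex.add_im, Complex.sub_re,
      Complex.sub_im, Complex.conj_re, Complex.conj_im, Complex.I_re, Complex.I_im,
      him0, him1]
    ring

lemma dotPauli_octaVec_sq (x : Fin 6) :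
    dotPauli (octaVec x) * dotPauli (octaVec x) = 1 := by
  rw [dotPauli_mul_self, octaVec_sq]
  norm_num

lemma antiOcta_posSemidef (x : Fin 6) : (antiOcta x).PosSemidef := by
  have hD1 := dotPauli_octaVec_sq x
  set D := dotPauli (octaVec x) with hD
  have key : antiOcta x
      = ((((Real.sqrt 24 : ℝ) : ℂ)⁻¹ • (1 - D))ᴴ) * (((Real.sqrt 24 : ℝ) : ℂ)⁻¹ • (1 - D)) := by
    rw [Matrix.conjTranspose_smul, Matrix.conjTranspose_sub, Matrix.conjTranspose_one]
    rw [hD, dotPauli_conjTranspose, ← hD]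
    rw [Matrix.smul_mul, Matrix.mul_smul, smul_smul]
    have hmul : (1 - D) * (1 - D) = (2:ℂ) • (1 - D) := by
      rw [sub_mul, mul_sub, mul_sub, one_mul, mul_one, hD1]
      ext i j
      simp [Matrix.sub_apply, Matrix.smul_apply]
      ring
    rw [hmul, smul_smul]
    have h24 : Real.sqrt 24 * Real.sqrt 24 = 24 := Real.mul_self_sqrt (by norm_num)
    have h24c : ((Real.sqrt 24 : ℝ) : ℂ) * ((Real.sqrt 24 : ℝ) : ℂ) = 24 := by
      exact_mod_cast h24
    have hpos : (0:ℝ) < Real.sqrt 24 := Real.sqrt_pos.2 (by norm_num)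
    have hne : ((Real.sqrt 24 : ℝ) : ℂ) ≠ 0 := by
      exact_mod_cast hpos.ne'
    have hc : star ((((Real.sqrt 24 : ℝ) : ℂ))⁻¹) * (((Real.sqrt 24 : ℝ) : ℂ))⁻¹ * 2
        = (1/12 : ℂ) := by
      rw [star_inv₀, Complex.star_def, Complex.conj_ofReal]
      field_simp
      linear_combination (-1 : ℂ) * h24c
    rw [hc]
    rfl
  rw [key]
  exact Matrix.posSemidef_conjTranspose_mul_self _

lemma antiOcta_mul_octaPOVM_self (x : Fin 6) : antiOcta x * octaPOVM x = 0 := by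
  have hD1 := dotPauli_octaVec_sq x
  simp only [antiOcta, octaPOVM, Matrix.smul_mul, Matrix.mul_smul, smul_smul]
  rw [sub_mul, mul_add, mul_add, one_mul, one_mul, mul_one, hD1]
  ext i j
  simp only [Matrix.smul_apply, Matrix.sub_apply, Matrix.add_apply, Matrix.zero_apply]
  ring_nf


-- ===== ensemble-level bound =====

lemma inner_sum_bound {p n1 n2 n3 : ℝ} (hp0 : 0 ≤ p)
    (hcon : n1^2 + n2^2 + n3^2 ≤ p^2) :
    (p + n1)/6 * Real.log (6 * ((p + n1)/6) / p) + (p - n1)/6 * Real.log (6 * ((p - n1)/6) / p)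
    + (p + n2)/6 * Real.log (6 * ((p + n2)/6) / p) + (p - n2)/6 * Real.log (6 * ((p - n2)/6) / p)
    + (p + n3)/6 * Real.log (6 * ((p + n3)/6) / p) + (p - n3)/6 * Real.log (6 * ((p - n3)/6) / p)
      ≤ Real.log 2 / 3 * p := by
  rcases eq_or_lt_of_le hp0 with hp | hp
  · -- p = 0 forces n_i = 0
    have hn1 : n1 = 0 := by nlinarith [sq_nonneg n1, sq_nonneg n2, sq_nonneg n3]
    have hn2 : n2 = 0 := by nlinarith [sq_nonneg n1, sq_nonneg n2, sq_nonneg n3]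
    have hn3 : n3 = 0 := by nlinarith [sq_nonneg n1, sq_nonneg n2, sq_nonneg n3]
    rw [← hp, hn1, hn2, hn3]
    norm_num
  · have he : ∀ s : ℝ, 6 * ((p + s)/6) / p = (p + s) / p := by intro s; ring_nf
    have he' : ∀ s : ℝ, 6 * ((p - s)/6) / p = (p - s) / p := by intro s; ring_nf
    rw [he n1, he' n1, he n2, he' n2, he n3, he' n3]
    have b1 := pair_bound hp (by nlinarith [sq_nonneg n2, sq_nonneg n3] : n1^2 ≤ p^2)
    have b2 := pair_bound hp (by nlinarith [sq_nonneg n1, sq_nonneg n3] : n2^2 ≤ p^2)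
    have b3 := pair_bound hp (by nlinarith [sq_nonneg n1, sq_nonneg n2] : n3^2 ≤ p^2)
    have hsum : (n1^2 + n2^2 + n3^2)/p ≤ p := by
      rw [div_le_iff₀ hp]; nlinarith
    have hlog2 : 0 ≤ Real.log 2 := Real.log_nonneg (by norm_num)
    calc (p + n1)/6 * Real.log ((p + n1)/p) + (p - n1)/6 * Real.log ((p - n1)/p)
        + (p + n2)/6 * Real.log ((p + n2)/p) + (p - n2)/6 * Real.log ((p - n2)/p)
        + (p + n3)/6 * Real.log ((p + n3)/p) + (p - n3)/6 * Real.log ((p - n3)/p)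
        ≤ Real.log 2/3 * (n1^2/p) + Real.log 2/3 * (n2^2/p) + Real.log 2/3 * (n3^2/p) := by
          linarith [b1, b2, b3]
      _ = Real.log 2/3 * ((n1^2 + n2^2 + n3^2)/p) := by ring
      _ ≤ Real.log 2/3 * p := by
          apply mul_le_mul_of_nonneg_left hsum
          positivity

lemma MI_bound {n : ℕ} (P : Fin n → Fin 6 → ℝ) (p : Fin n → ℝ) (q : Fin 6 → ℝ)
    (n1 n2 n3 : Fin n → ℝ)
    (hq : ∀ y, q y = ∑ x, P x y)
    (hp0 : ∀ x, 0 ≤ p x)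
    (hcon : ∀ x, (n1 x)^2 + (n2 x)^2 + (n3 x)^2 ≤ (p x)^2)
    (h0 : ∀ x, P x 0 = (p x + n1 x)/6) (h1 : ∀ x, P x 1 = (p x - n1 x)/6)
    (h2 : ∀ x, P x 2 = (p x + n2 x)/6) (h3 : ∀ x, P x 3 = (p x - n2 x)/6)
    (h4 : ∀ x, P x 4 = (p x + n3 x)/6) (h5 : ∀ x, P x 5 = (p x - n3 x)/6)
    (hpsum : ∑ x, p x = 1) :
    ∑ x, ∑ y, P x y * Real.log (P x y / (p x * q y)) ≤ Real.log 2 / 3 := by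
  classical
  have hPnn : ∀ x y, 0 ≤ P x y := by
    intro x y
    have c := hcon x
    have pp := hp0 x
    have s1 := sq_nonneg (n1 x); have s2 := sq_nonneg (n2 x); have s3 := sq_nonneg (n3 x)
    fin_cases y
    · show 0 ≤ P x 0; rw [h0 x]; nlinarith
    · show 0 ≤ P x 1; rw [h1 x]; nlinarith
    · show 0 ≤ P x 2; rw [h2 x]; nlinarith
    · show 0 ≤ P x 3; rw [h3 x]; nlinarith
    · show 0 ≤ P x 4; rw [h4 x]; nlinarith
    · show 0 ≤ P x 5; rw [h5 x]; nlinarith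
  have hProw : ∀ x, ∑ y, P x y = p x := by
    intro x
    rw [Fin.sum_univ_six, h0 x, h1 x, h2 x, h3 x, h4 x, h5 x]
    ring
  have hq_nn : ∀ y, 0 ≤ q y := by
    intro y; rw [hq y]; exact Finset.sum_nonneg fun x _ => hPnn x y
  have hqsum : ∑ y, q y = 1 := by
    calc ∑ y, q y = ∑ y, ∑ x, P x y := Finset.sum_congr rfl fun y _ => hq y
      _ = ∑ x, ∑ y, P x y := Finset.sum_comm
      _ = ∑ x, p x := Finset.sum_congr rfl fun x _ => hProw x
      _ = 1 := hpsum
  have hPle_q : ∀ x y, P x y ≤ q y := by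
    intro x y; rw [hq y]
    exact Finset.single_le_sum (fun x' _ => hPnn x' y) (Finset.mem_univ x)
  have hPle_p : ∀ x y, P x y ≤ p x := by
    intro x y; rw [← hProw x]
    exact Finset.single_le_sum (fun y' _ => hPnn x y') (Finset.mem_univ y)
  have hsplit : ∀ x y, P x y * Real.log (P x y / (p x * q y))
      ≤ P x y * Real.log (6 * P x y / p x) - P x y * Real.log (6 * q y) := by
    intro x y
    rcases (hPnn x y).eq_or_lt with hP0 | hP0
    · rw [← hP0]; simp
    · have hpx : 0 < p x := lt_of_lt_of_le hP0 (hPle_p x y)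
      have hqy : 0 < q y := lt_of_lt_of_le hP0 (hPle_q x y)
      have harg : P x y / (p x * q y) = (6 * P x y / p x) / (6 * q y) := by
        field_simp
      rw [harg, Real.log_div (by positivity) (by positivity), mul_sub]
  have step1 : ∑ x, ∑ y, P x y * Real.log (P x y / (p x * q y))
      ≤ (∑ x, ∑ y, P x y * Real.log (6 * P x y / p x))
        - ∑ x, ∑ y, P x y * Real.log (6 * q y) := by
    rw [← Finset.sum_sub_distrib]
    apply Finset.sum_le_sum
    intro x _
    rw [← Finset.sum_sub_distrib]
    exact Finset.sum_le_sum fun y _ => hsplit x y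
  have stepB : ∑ x, ∑ y, P x y * Real.log (6 * q y) = ∑ y, q y * Real.log (6 * q y) := by
    rw [Finset.sum_comm]
    apply Finset.sum_congr rfl
    intro y _
    rw [← Finset.sum_mul, ← hq y]
  have hB : (0:ℝ) ≤ ∑ x, ∑ y, P x y * Real.log (6 * q y) := by
    rw [stepB]
    have hkl : ∑ y, -(q y * Real.log (6 * q y)) ≤ ∑ y : Fin 6, (1/6 - q y) :=
      Finset.sum_le_sum fun y _ => kl_term (hq_nn y)
    have : ∑ y : Fin 6, (1/6 - q y) = 0 := by
      rw [Finset.sum_sub_distrib, hqsum]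
      simp
    rw [Finset.sum_neg_distrib] at hkl
    linarith
  have stepA : ∑ x, ∑ y, P x y * Real.log (6 * P x y / p x) ≤ Real.log 2 / 3 := by
    calc ∑ x, ∑ y, P x y * Real.log (6 * P x y / p x)
        ≤ ∑ x, Real.log 2 / 3 * p x := by
          apply Finset.sum_le_sum
          intro x _
          rw [Fin.sum_univ_six, h0 x, h1 x, h2 x, h3 x, h4 x, h5 x]
          exact inner_sum_bound (hp0 x) (hcon x)
      _ = Real.log 2 / 3 := by rw [← Finset.mul_sum, hpsum, mul_one]
  linarith [step1, stepA, hB]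

lemma mutualInfo_octa_le {n : ℕ} (ρ : Fin n → Matrix (Fin 2) (Fin 2) ℂ)
    (h : IsEnsemble ρ) : mutualInfo ρ octaPOVM ≤ Real.log 2 / 3 := by
  have hd : ∀ x, ∃ a b c : ℝ,
      0 ≤ ((ρ x).trace).re ∧ a^2 + b^2 + c^2 ≤ ((ρ x).trace).re^2 ∧
      ((ρ x * octaPOVM 0).trace).re = (((ρ x).trace).re + a)/6 ∧
      ((ρ x * octaPOVM 1).trace).re = (((ρ x).trace).re - a)/6 ∧
      ((ρ x * octaPOVM 2).trace).re = (((ρ x).trace).re + b)/6 ∧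
      ((ρ x * octaPOVM 3).trace).re = (((ρ x).trace).re - b)/6 ∧
      ((ρ x * octaPOVM 4).trace).re = (((ρ x).trace).re + c)/6 ∧
      ((ρ x * octaPOVM 5).trace).re = (((ρ x).trace).re - c)/6 := by
    intro x
    obtain ⟨p', a, b, c, htr, hp0, hcon, e0, e1, e2, e3, e4, e5⟩ := state_data (h.1 x)
    subst htr
    exact ⟨a, b, c, hp0, hcon, e0, e1, e2, e3, e4, e5⟩
  choose n1 n2 n3 hp0 hcon h0 h1 h2 h3 h4 h5 using hd
  have hpsum : ∑ x, ((ρ x).trace).re = 1 := by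
    have hre := congrArg Complex.re h.2
    rw [Complex.re_sum] at hre
    simpa using hre
  exact MI_bound (fun x y => ((ρ x * octaPOVM y).trace).re)
    (fun x => ((ρ x).trace).re)
    (fun y => ∑ x', ((ρ x' * octaPOVM y).trace).re)
    n1 n2 n3 (fun y => rfl) hp0 hcon h0 h1 h2 h3 h4 h5 hpsum

-- ===== attained value =====

lemma anti_isEnsemble : IsEnsemble antiOcta := by
  constructor
  · exact antiOcta_posSemidef
  · rw [Fin.sum_univ_six, anti_trace, anti_trace, anti_trace, anti_trace, anti_trace,
      anti_trace]
    norm_num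

lemma anti_P (x y : Fin 6) :
    ((antiOcta x * octaPOVM y).trace).re
      = (1 - (octaVec x 0 * octaVec y 0 + octaVec x 1 * octaVec y 1
          + octaVec x 2 * octaVec y 2))/36 := by
  rw [trace_anti_octa]
  exact Complex.ofReal_re _

lemma anti_q (y : Fin 6) :
    ∑ x', ((antiOcta x' * octaPOVM y).trace).re = 1/6 := by
  simp only [anti_P, Fin.sum_univ_six, octaVec_zero, octaVec_one, octaVec_two,
    octaVec_three, octaVec_four, octaVec_five]
  fin_cases y <;> norm_num [octaVec, Matrix.cons_val_two, Matrix.vecHead, Matrix.vecTail]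

lemma anti_p (x : Fin 6) : ((antiOcta x).trace).re = 1/6 := by
  rw [anti_trace]
  norm_num

lemma mutualInfo_anti : mutualInfo antiOcta octaPOVM = 1/3 * Real.log 2 := by
  unfold mutualInfo
  have hterm : ∀ x : Fin 6, ∑ y, ((antiOcta x * octaPOVM y).trace).re *
      Real.log (((antiOcta x * octaPOVM y).trace).re /
        (((antiOcta x).trace).re * ∑ x', ((antiOcta x' * octaPOVM y).trace).re))
      = 1/18 * Real.log 2 := by
    intro x
    have hy : ∀ y : Fin 6, ((antiOcta x).trace).re * ∑ x', ((antiOcta x' * octaPOVM y).trace).re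
        = 1/36 := by
      intro y
      rw [anti_p, anti_q]
      norm_num
    calc ∑ y, ((antiOcta x * octaPOVM y).trace).re *
          Real.log (((antiOcta x * octaPOVM y).trace).re /
            (((antiOcta x).trace).re * ∑ x', ((antiOcta x' * octaPOVM y).trace).re))
        = ∑ y, ((antiOcta x * octaPOVM y).trace).re *
            Real.log (((antiOcta x * octaPOVM y).trace).re / (1/36)) := by
          apply Finset.sum_congr rfl
          intro y _
          rw [hy y]
      _ = 1/18 * Real.log 2 := by
          simp only [anti_P, Fin.sum_univ_six, octaVec_zero, octaVec_one, octaVec_two,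
            octaVec_three, octaVec_four, octaVec_five]
          fin_cases x <;>
            · norm_num [octaVec, Real.log_one, Matrix.cons_val_two, Matrix.vecHead, Matrix.vecTail]
  rw [Fin.sum_univ_six, hterm, hterm, hterm, hterm, hterm, hterm]
  ring

-- ===== statement =====
/-- the informational power of the octahedral (complete MUB) POVM equals
`(1/6) ln 4 = (1/3) ln 2`, attained by the anti-octahedral ensemble, which satisfies
`ρ_x π_x = 0`. -/
theorem octa_infoPower :
    infoPower octaPOVM = (1 / 6) * Real.log 4
    ∧ (1 / 6) * Real.log 4 = (1 / 3) * Real.log 2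
    ∧ IsEnsemble antiOcta
    ∧ mutualInfo antiOcta octaPOVM = (1 / 6) * Real.log 4
    ∧ ∀ x, antiOcta x * octaPOVM x = 0 := by
  have hlog4 : Real.log 4 = 2 * Real.log 2 := by
    rw [show (4:ℝ) = 2^2 by norm_num, Real.log_pow]
    norm_num
  have heq : (1/6 : ℝ) * Real.log 4 = 1/3 * Real.log 2 := by
    rw [hlog4]; ring
  have hens := anti_isEnsemble
  have hmem : (1/6 : ℝ) * Real.log 4 ∈ {w | ∃ (n : ℕ) (ρ : Fin n → Matrix (Fin 2) (Fin 2) ℂ),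
      IsEnsemble ρ ∧ w = mutualInfo ρ octaPOVM} :=
    ⟨6, antiOcta, hens, by rw [mutualInfo_anti, heq]⟩
  have hub : ∀ w ∈ {w | ∃ (n : ℕ) (ρ : Fin n → Matrix (Fin 2) (Fin 2) ℂ),
      IsEnsemble ρ ∧ w = mutualInfo ρ octaPOVM}, w ≤ (1/6 : ℝ) * Real.log 4 := by
    rintro w ⟨n, ρ, hρ, rfl⟩
    calc mutualInfo ρ octaPOVM ≤ Real.log 2 / 3 := mutualInfo_octa_le ρ hρ
      _ = 1/6 * Real.log 4 := by rw [hlog4]; ring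
  refine ⟨?_, heq, hens, by rw [mutualInfo_anti, heq], antiOcta_mul_octaPOVM_self⟩
  unfold infoPower
  exact le_antisymm (csSup_le ⟨_, hmem⟩ hub) (le_csSup ⟨_, fun w hw => hub w hw⟩ hmem)
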